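/- Given any three pairwise distinct nonnegative integers s_0, s_1, s_2, there exist rational numbers λ and μ such that f_{s_2+j} = λ f_{s_0+j} + μ f_{s_1+j} for all integers j ≥ 0. -/

import Mathlib

lemma fib_det_aux (m k : ℕ) :
    (Nat.fib (m + k) : ℚ) * Nat.fib (m + 1) - Nat.fib m * Nat.fib (m + k + 1)
      = (-1) ^ m * Nat.fib k := by
  induction m with
  | zero => simp
  | succ n ih =>
    have e1 : n + 1 + k = (n + k) + 1 := by omega
    have e2 : n + k + 1 + 1 = (n + k) + 2 := by omega
    rw [e1, e2, Nat.fib_add_two, Nat.fib_add_two]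
    push_cast
    linear_combination (-1 : ℚ) * ih

lemma fib_det_ne (a b : ℕ) (hab : a ≠ b) :
    (Nat.fib a : ℚ) * Nat.fib (b + 1) - Nat.fib b * Nat.fib (a + 1) ≠ 0 := by
  rcases lt_or_gt_of_ne hab with h | h
  · have hk : b = a + (b - a) := by omega
    have := fib_det_aux a (b - a)
    rw [← hk] at this
    have hfk : (Nat.fib (b - a) : ℚ) ≠ 0 := by
      simp [Nat.fib_eq_zero]; omega
    intro hc
    apply hfk
    have : ((-1 : ℚ)) ^ a * Nat.fib (b - a) = 0 := by linarith [this, hc]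
    rcases mul_eq_zero.1 this with h' | h'
    · exact absurd h' (by positivity)
    · exact h'
  · have hk : a = b + (a - b) := by omega
    have := fib_det_aux b (a - b)
    rw [← hk] at this
    have hfk : (Nat.fib (a - b) : ℚ) ≠ 0 := by
      simp [Nat.fib_eq_zero]; omega
    intro hc
    apply hfk
    have : ((-1 : ℚ)) ^ b * Nat.fib (a - b) = 0 := by linarith [this, hc]
    rcases mul_eq_zero.1 this with h' | h'
    · exact absurd h' (by positivity)
    · exact h'

/-- **Sublemma 3.3 (sl:basic).** Given any three pairwise distinct nonnegative
integers `s₀, s₁, s₂`, there are rational constants `λ, μ` such that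
`f_{s₂+j} = λ f_{s₀+j} + μ f_{s₁+j}` for all `j ≥ 0`. -/
theorem stmt_10 (s₀ s₁ s₂ : ℕ) (h01 : s₀ ≠ s₁) (h02 : s₀ ≠ s₂) (h12 : s₁ ≠ s₂) :
    ∃ lam mu : ℚ, ∀ j : ℕ,
      (Nat.fib (s₂ + j) : ℚ) =
        lam * (Nat.fib (s₀ + j) : ℚ) + mu * (Nat.fib (s₁ + j) : ℚ) := by
  set a : ℚ := (Nat.fib s₀ : ℚ)
  set b : ℚ := (Nat.fib s₁ : ℚ)
  set c : ℚ := ((Nat.fib (s₀ + 1) : ℕ) : ℚ)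
  set d : ℚ := ((Nat.fib (s₁ + 1) : ℕ) : ℚ)
  set p : ℚ := (Nat.fib s₂ : ℚ)
  set q : ℚ := ((Nat.fib (s₂ + 1) : ℕ) : ℚ)
  have hdet : a * d - b * c ≠ 0 := fib_det_ne s₀ s₁ h01
  refine ⟨(p * d - q * b) / (a * d - b * c), (a * q - c * p) / (a * d - b * c), ?_⟩
  have key : ∀ j : ℕ,
      ((Nat.fib (s₂ + j) : ℚ) =
        (p * d - q * b) / (a * d - b * c) * Nat.fib (s₀ + j) +
          (a * q - c * p) / (a * d - b * c) * Nat.fib (s₁ + j)) ∧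
      ((Nat.fib (s₂ + (j+1)) : ℚ) =
        (p * d - q * b) / (a * d - b * c) * Nat.fib (s₀ + (j+1)) +
          (a * q - c * p) / (a * d - b * c) * Nat.fib (s₁ + (j+1))) := by
    intro j
    induction j with
    | zero =>
      constructor
      · simp only [Nat.add_zero]
        simp only [a, b, c, d, p, q] at hdet ⊢
        rw [div_mul_eq_mul_div, div_mul_eq_mul_div, ← add_div, eq_div_iff hdet]
        ring
      · simp only [a, b, c, d, p, q] at hdet ⊢
        rw [div_mul_eq_mul_div, div_mul_eq_mul_div, ← add_div, eq_div_iff hdet]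
        ring
    | succ n ih =>
      refine ⟨ih.2, ?_⟩
      have e0 : s₂ + (n + 1 + 1) = (s₂ + n) + 2 := by omega
      have e1 : s₀ + (n + 1 + 1) = (s₀ + n) + 2 := by omega
      have e2 : s₁ + (n + 1 + 1) = (s₁ + n) + 2 := by omega
      have e0' : s₂ + (n + 1) = (s₂ + n) + 1 := by omega
      have e1' : s₀ + (n + 1) = (s₀ + n) + 1 := by omega
      have e2' : s₁ + (n + 1) = (s₁ + n) + 1 := by omega
      rw [e0, e1, e2, Nat.fib_add_two, Nat.fib_add_two, Nat.fib_add_two]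
      push_cast
      have h1 := ih.1
      have h2 := ih.2
      rw [e0', e1', e2'] at h2
      linear_combination h1 + h2
  exact fun j => (key j).1
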